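/- If real numbers $C_0, C_1, \dots, C_d$ satisfy $\sum_{p=0}^{d} C_p \cos^{2p}\theta \sin^{2(d-p)}\theta = C_d$ for all real $\theta$, then $C_p = \binom{d}{p} C_d$ for every $0 \le p \le d$. -/

import Mathlib

theorem stmt_0 (d : ℕ) (C : ℕ → ℝ)
    (h : ∀ θ : ℝ, ∑ p ∈ Finset.range (d + 1),
      C p * Real.cos θ ^ (2 * p) * Real.sin θ ^ (2 * (d - p)) = C d) :
    ∀ p ≤ d, C p = (d.choose p : ℝ) * C d := by
  -- Step 1: polynomial identity for t ≥ 0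
  have key : ∀ t : ℝ, 0 ≤ t →
      ∑ p ∈ Finset.range (d + 1), (C p - (d.choose p : ℝ) * C d) * t ^ p = 0 := by
    intro t ht
    have h1t : (0:ℝ) < 1 + t := by linarith
    set x : ℝ := t / (1 + t) with hx
    have hx0 : 0 ≤ x := div_nonneg ht h1t.le
    have hx1 : x ≤ 1 := by
      rw [hx, div_le_one h1t]; linarith
    have h1x : 1 - x = 1 / (1 + t) := by
      rw [hx]; field_simp; ring
    set θ := Real.arccos (Real.sqrt x) with hθ
    have hcos : Real.cos θ = Real.sqrt x := by
      apply Real.cos_arccos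
      · linarith [Real.sqrt_nonneg x]
      · exact Real.sqrt_le_one.mpr hx1
    have hcos2 : Real.cos θ ^ 2 = x := by
      rw [hcos, Real.sq_sqrt hx0]
    have hsin2 : Real.sin θ ^ 2 = 1 - x := by
      have := Real.sin_sq_add_cos_sq θ
      linarith [hcos2]
    have hθid := h θ
    have h2 : ∑ p ∈ Finset.range (d + 1), C p * x ^ p * (1 - x) ^ (d - p) = C d := by
      rw [← hθid]
      apply Finset.sum_congr rfl
      intro p hp
      rw [pow_mul, pow_mul, hcos2, hsin2]
    -- multiply by (1+t)^d
    have h3 : ∑ p ∈ Finset.range (d + 1), C p * t ^ p = C d * (1 + t) ^ d := by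
      have := congrArg (· * (1 + t) ^ d) h2
      rw [← this, Finset.sum_mul]
      apply Finset.sum_congr rfl
      intro p hp
      simp only [Finset.mem_range] at hp
      have hpd : p ≤ d := Nat.lt_succ_iff.mp hp
      have : (1 + t) ^ d = (1 + t) ^ p * (1 + t) ^ (d - p) := by
        rw [← pow_add, Nat.add_sub_cancel' hpd]
      rw [this, hx, h1x]
      rw [div_pow, div_pow, one_pow]
      field_simp
    have h4 : C d * (1 + t) ^ d = ∑ p ∈ Finset.range (d + 1), (d.choose p : ℝ) * C d * t ^ p := by
      rw [add_comm (1:ℝ) t, add_pow]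
      rw [Finset.mul_sum]
      apply Finset.sum_congr rfl
      intro p hp
      ring
    simp only [sub_mul, Finset.sum_sub_distrib, h3, h4, sub_self]
  -- Step 2: the polynomial has infinitely many roots, so all coefficients vanish
  set Q : Polynomial ℝ :=
    ∑ p ∈ Finset.range (d + 1), Polynomial.C (C p - (d.choose p : ℝ) * C d) * Polynomial.X ^ p
    with hQ
  have hQeval : ∀ t : ℝ, 0 ≤ t → Q.eval t = 0 := by
    intro t ht
    rw [hQ]
    simp only [Polynomial.eval_finset_sum, Polynomial.eval_mul, Polynomial.eval_C,
      Polynomial.eval_pow, Polynomial.eval_X]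
    exact key t ht
  have hQ0 : Q = 0 := by
    apply Polynomial.eq_zero_of_infinite_isRoot
    apply Set.Infinite.mono (s := Set.Ici (0:ℝ))
    · intro t ht; exact hQeval t ht
    · exact Set.Ici_infinite 0
  intro p hpd
  have hc : Q.coeff p = C p - (d.choose p : ℝ) * C d := by
    rw [hQ, Polynomial.finset_sum_coeff]
    rw [Finset.sum_eq_single p]
    · rw [Polynomial.coeff_C_mul, Polynomial.coeff_X_pow]; simp
    · intro b _ hbp
      rw [Polynomial.coeff_C_mul, Polynomial.coeff_X_pow]; simp [Ne.symm hbp]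
    · intro hnp
      exact absurd (Finset.mem_range.mpr (Nat.lt_succ_of_le hpd)) hnp
  rw [hQ0] at hc
  simp at hc
  linarith
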